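/- Let r > 0 and let x₀ be a point of Euclidean space ℝ³. Then the integral over all of ℝ³ of the filter weight function x ↦ max(0, 1 − ‖x − x₀‖ / r) with respect to Lebesgue measure equals π r³ / 3. -/

import Mathlib

open MeasureTheory Real

lemma oned (r : ℝ) (hr : 0 < r) :
    ∫ y in Set.Ioi (0:ℝ), y ^ 2 • max 0 (1 - y / r) = r ^ 3 / 12 := by
  have hcong : Set.EqOn (fun y : ℝ => y ^ 2 • max 0 (1 - y / r))
      (Set.indicator (Set.Ioc 0 r) (fun y => y ^ 2 * (1 - y / r))) (Set.Ioi 0) := by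
    intro y hy
    simp only [Set.indicator, Set.mem_Ioc, smul_eq_mul]
    by_cases h : y ≤ r
    · rw [if_pos ⟨hy, h⟩, max_eq_right]
      rw [sub_nonneg, div_le_one hr]; exact h
    · rw [if_neg (by tauto), max_eq_left, mul_zero]
      rw [sub_nonpos, le_div_iff₀ hr, one_mul]; linarith
  rw [setIntegral_congr_fun measurableSet_Ioi hcong,
    setIntegral_indicator measurableSet_Ioc,
    Set.inter_eq_right.mpr (Set.Ioc_subset_Ioi_self),
    ← intervalIntegral.integral_of_le hr.le]
  have h2 : ∀ y : ℝ, y ^ 2 * (1 - y / r) = y ^ 2 - y ^ 3 / r := by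
    intro y; field_simp
  simp_rw [h2]
  rw [intervalIntegral.integral_sub ((continuous_pow 2).intervalIntegrable 0 r)
      (((continuous_pow 3).div_const r).intervalIntegrable 0 r),
    integral_pow]
  simp_rw [div_eq_mul_inv (_ ^ 3), intervalIntegral.integral_mul_const, integral_pow]
  field_simp
  ring

/-- The total integral over three-dimensional Euclidean space of the density-filter
weight function `x ↦ max 0 (1 - ‖x - x₀‖ / r)` with filter radius `r > 0` equals
`π r³ / 3`. -/
theorem integral_cone_weight_three_dim (r : ℝ) (hr : 0 < r)
    (x₀ : EuclideanSpace ℝ (Fin 3)) :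
    ∫ x : EuclideanSpace ℝ (Fin 3), max 0 (1 - ‖x - x₀‖ / r) = π * r ^ 3 / 3 := by
  have h1 : ∫ x : EuclideanSpace ℝ (Fin 3), max 0 (1 - ‖x - x₀‖ / r)
      = ∫ x : EuclideanSpace ℝ (Fin 3), (fun y : ℝ => max 0 (1 - y / r)) ‖x‖ :=
    integral_sub_right_eq_self (fun x => max 0 (1 - ‖x‖ / r)) x₀
  rw [h1, integral_fun_norm_addHaar volume (fun y : ℝ => max 0 (1 - y / r))]
  simp only [finrank_euclideanSpace, Fintype.card_fin, measureReal_def, EuclideanSpace.volume_ball]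
  rw [show (3:ℕ) - 1 = 2 from rfl, oned r hr]
  have hG : Real.Gamma ((3:ℕ) / 2 + 1) = 3 / 4 * √π := by
    push_cast
    rw [Real.Gamma_add_one (by norm_num),
      show (3:ℝ)/2 = 1/2 + 1 by norm_num, Real.Gamma_add_one (by norm_num),
      Real.Gamma_one_half_eq]
    ring
  rw [hG]
  have hπ : (0:ℝ) < √π := Real.sqrt_pos.mpr pi_pos
  rw [ENNReal.ofReal_one, one_pow, one_mul, ENNReal.toReal_ofReal (by positivity)]
  rw [show √π ^ 3 = π * √π by
    rw [pow_succ, sq_sqrt pi_pos.le]]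
  field_simp
  ring
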